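/- For every natural number k ≥ 1, the real number (1/2 − 1/(10·k))^k is at least 1/(2·2^k), and the real number (1/2 + 1/(10·k))^k is at most 2/2^k. -/

import Mathlib

lemma exp_fifth_le_two : Real.exp (1/5) ≤ 2 := by
  have h5 : Real.exp (1/5) ^ 5 = Real.exp 1 := by
    rw [← Real.exp_nat_mul]; norm_num
  have h : Real.exp (1/5) ^ 5 < 2 ^ 5 := by
    rw [h5]
    have := Real.exp_one_lt_d9
    norm_num at this ⊢
    linarith
  exact le_of_lt (lt_of_pow_lt_pow_left₀ 5 (by norm_num) h)

/-- For every `k ≥ 1`: `(1/2 − 1/(10k))^k ≥ 1/(2·2^k)` and `(1/2 + 1/(10k))^k ≤ 2/2^k`. -/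
theorem almost_fair_coin_powers (k : ℕ) (hk : 1 ≤ k) :
    1 / (2 * (2 : ℝ) ^ k) ≤ ((1 : ℝ) / 2 - 1 / (10 * k)) ^ k ∧
    ((1 : ℝ) / 2 + 1 / (10 * k)) ^ k ≤ 2 / (2 : ℝ) ^ k := by
  have hk0 : (0:ℝ) < (k:ℝ) := by exact_mod_cast hk
  set t : ℝ := 1 / (5 * k) with ht
  have ht0 : 0 < t := by positivity
  have ht5 : t ≤ 1/5 := by
    rw [ht]
    rw [div_le_div_iff₀ (by positivity) (by norm_num)]
    have hk1 : (1:ℝ) ≤ (k:ℝ) := by exact_mod_cast hk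
    nlinarith
  have hkt : (k:ℝ) * t = 1/5 := by
    rw [ht, mul_one_div, div_eq_iff (by positivity)]; ring
  have hsplit1 : (1:ℝ)/2 - 1/(10*k) = (1/2) * (1 - t) := by
    rw [ht]; field_simp; ring
  have hsplit2 : (1:ℝ)/2 + 1/(10*k) = (1/2) * (1 + t) := by
    rw [ht]; field_simp; ring
  constructor
  · -- lower bound
    rw [hsplit1, mul_pow]
    have hbern : 1 + (k:ℝ) * (-t) ≤ (1 + (-t)) ^ k :=
      one_add_mul_le_pow (by linarith) k
    have h2 : (1:ℝ)/2 ≤ (1 - t) ^ k := by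
      have : (1:ℝ) + (k:ℝ) * (-t) = 4/5 := by rw [mul_neg, hkt]; norm_num
      rw [this] at hbern
      calc (1:ℝ)/2 ≤ 4/5 := by norm_num
        _ ≤ (1 + (-t)) ^ k := hbern
        _ = (1 - t) ^ k := by ring_nf
    calc 1 / (2 * (2:ℝ)^k) = ((1:ℝ)/2)^k * (1/2) := by
          rw [div_pow, one_pow]; field_simp
      _ ≤ ((1:ℝ)/2)^k * (1 - t)^k := by
          apply mul_le_mul_of_nonneg_left h2 (by positivity)
  · -- upper bound
    rw [hsplit2, mul_pow]
    have hexp : (1 + t) ^ k ≤ Real.exp ((k:ℝ) * t) := by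
      calc (1 + t) ^ k ≤ (Real.exp t) ^ k := by
            apply pow_le_pow_left₀ (by linarith)
            linarith [Real.add_one_le_exp t]
        _ = Real.exp ((k:ℝ) * t) := by rw [← Real.exp_nat_mul]
    have h2 : (1 + t) ^ k ≤ 2 := by
      rw [hkt] at hexp
      exact hexp.trans exp_fifth_le_two
    calc ((1:ℝ)/2)^k * (1+t)^k ≤ ((1:ℝ)/2)^k * 2 := by
          apply mul_le_mul_of_nonneg_left h2 (by positivity)
      _ = 2 / (2:ℝ)^k := by rw [div_pow, one_pow]; ring
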